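/- Let u_1 > u_2 > ... > u_t be a longest chain in a finite poset P with t ≥ 2. Then there exists an index β with 1 < β ≤ t such that u_α is a surplus element for all α < β, u_α is a deficit element for all α > β, and u_β is either balanced or deficit. -/
import Mathlib


open Finset
open scoped Classical

/-- `e X Y` counts pairs `(x,y)` with `x ∈ X`, `y ∈ Y`, `x < y`. -/
noncomputable def e {P : Type*} [Fintype P] [PartialOrder P] (X Y : Finset P) : ℕ :=
  ((X ×ˢ Y).filter fun p => p.1 < p.2).card

lemma e_left {P : Type*} [Fintype P] [PartialOrder P] (x : P) :
    e {x} (Finset.univ : Finset P) = (Finset.univ.filter fun y => x < y).card := by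
  unfold e
  rw [Finset.singleton_product, Finset.filter_map, Finset.card_map]
  rfl

lemma e_right {P : Type*} [Fintype P] [PartialOrder P] (x : P) :
    e (Finset.univ : Finset P) {x} = (Finset.univ.filter fun y => y < x).card := by
  unfold e
  rw [Finset.product_singleton, Finset.filter_map, Finset.card_map]
  rfl

set_option maxHeartbeats 1000000 in
/-- Along a longest chain there is an index `β` such that all earlier elements are
surplus, all later ones are deficit, and `u β` itself is balanced or deficit. -/
theorem longest_chain_split (P : Type*) [Fintype P] [PartialOrder P]
    (t : ℕ) (ht : 2 ≤ t) (u : Fin t → P) (hu : StrictAnti u)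
    (hmax : ∀ (s : ℕ) (v : Fin s → P), StrictAnti v → s ≤ t) :
    ∃ β : Fin t, 0 < β.1 ∧
      (∀ α : Fin t, α < β →
        e {u α} (Finset.univ : Finset P) < e (Finset.univ : Finset P) {u α}) ∧
      (∀ α : Fin t, β < α →
        e (Finset.univ : Finset P) {u α} < e {u α} (Finset.univ : Finset P)) ∧
      (e {u β} (Finset.univ : Finset P) = e (Finset.univ : Finset P) {u β} ∨
        e (Finset.univ : Finset P) {u β} < e {u β} (Finset.univ : Finset P)) := by
  classical
  set A : Fin t → ℕ := fun α => (Finset.univ.filter fun y => u α < y).card with hA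
  set B : Fin t → ℕ := fun α => (Finset.univ.filter fun y => y < u α).card with hB
  have ht0 : 0 < t := by omega
  have hfirst : (⟨0, ht0⟩ : Fin t) < ⟨t - 1, by omega⟩ := by
    simp only [Fin.mk_lt_mk]; omega
  -- monotonicity along the chain
  have hAmono : ∀ α γ : Fin t, α < γ → A α < A γ := by
    intro α γ h
    have huv : u γ < u α := hu h
    apply Finset.card_lt_card
    constructor
    · intro y hy
      simp only [mem_filter, mem_univ, true_and] at hy ⊢
      exact huv.trans hy
    · intro hsub
      have := hsub (by simp [huv] : u α ∈ Finset.univ.filter fun y => u γ < y)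
      simp at this
  have hBmono : ∀ α γ : Fin t, α < γ → B γ < B α := by
    intro α γ h
    have huv : u γ < u α := hu h
    apply Finset.card_lt_card
    constructor
    · intro y hy
      simp only [mem_filter, mem_univ, true_and] at hy ⊢
      exact hy.trans huv
    · intro hsub
      have := hsub (by simp [huv] : u γ ∈ Finset.univ.filter fun y => y < u α)
      simp at this
  -- u 0 is maximal
  have hA0 : A ⟨0, ht0⟩ = 0 := by
    by_contra h
    obtain ⟨x, hx⟩ := Finset.card_pos.mp (Nat.pos_of_ne_zero h)
    simp only [mem_filter, mem_univ, true_and] at hx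
    set v : Fin (t + 1) → P := fun i =>
      if h : i.1 = 0 then x else u ⟨i.1 - 1, by omega⟩ with hv
    have hva : StrictAnti v := by
      intro i j hij
      have hij' : i.1 < j.1 := hij
      simp only [hv]
      rcases Nat.eq_zero_or_pos i.1 with h0 | h0
      · rw [dif_pos h0, dif_neg (by omega)]
        refine lt_of_le_of_lt ?_ hx
        exact hu.antitone (by simp only [Fin.mk_le_mk]; omega)
      · rw [dif_neg (by omega), dif_neg (by omega)]
        exact hu (by simp only [Fin.mk_lt_mk]; omega)
    have := hmax (t + 1) v hva
    omega
  -- u (t-1) is minimal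
  have hBlast : B ⟨t - 1, by omega⟩ = 0 := by
    by_contra h
    obtain ⟨x, hx⟩ := Finset.card_pos.mp (Nat.pos_of_ne_zero h)
    simp only [mem_filter, mem_univ, true_and] at hx
    set v : Fin (t + 1) → P := fun i =>
      if h : i.1 < t then u ⟨i.1, h⟩ else x with hv
    have hva : StrictAnti v := by
      intro i j hij
      have hij' : i.1 < j.1 := hij
      have hjl : j.1 ≤ t := by omega
      have hit : i.1 < t := by omega
      simp only [hv]
      rcases Nat.lt_or_ge j.1 t with hj | hj
      · rw [dif_pos hit, dif_pos hj]
        exact hu (by simp only [Fin.mk_lt_mk]; omega)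
      · rw [dif_pos hit, dif_neg (by omega)]
        refine lt_of_lt_of_le hx ?_
        exact hu.antitone (by simp only [Fin.mk_le_mk]; omega)
    have := hmax (t + 1) v hva
    omega
  have hB0 : 0 < B ⟨0, ht0⟩ := by
    rw [hB]
    apply Finset.card_pos.mpr
    exact ⟨u ⟨t - 1, by omega⟩, by simp [hu hfirst]⟩
  -- the first non-surplus index
  set S : Finset (Fin t) := Finset.univ.filter fun α => B α ≤ A α with hS
  have hlastS : (⟨t - 1, by omega⟩ : Fin t) ∈ S := by
    simp only [hS, mem_filter, mem_univ, true_and, hBlast]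
    exact Nat.zero_le _
  have hSne : S.Nonempty := ⟨_, hlastS⟩
  set β : Fin t := S.min' hSne with hβ
  have hβS : β ∈ S := S.min'_mem hSne
  have hβA : B β ≤ A β := by
    have := hβS; simp only [hS, mem_filter, mem_univ, true_and] at this; exact this
  refine ⟨β, ?_, ?_, ?_, ?_⟩
  · -- 0 < β
    rcases Nat.eq_zero_or_pos β.1 with h0 | h0
    · exfalso
      have hβ0 : β = ⟨0, ht0⟩ := Fin.ext h0
      rw [hβ0, hA0] at hβA
      omega
    · exact h0
  · intro α hα
    have hαS : α ∉ S := by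
      intro hmem
      exact absurd (S.min'_le α hmem) (not_le.mpr hα)
    have : ¬ B α ≤ A α := by
      intro h; exact hαS (by simp [hS, h])
    rw [e_left, e_right]
    exact lt_of_not_ge this
  · intro α hα
    rw [e_left, e_right]
    calc B α < B β := hBmono β α hα
      _ ≤ A β := hβA
      _ < A α := hAmono β α hα
  · rw [e_left, e_right]
    rcases lt_or_eq_of_le hβA with h | h
    · exact Or.inr h
    · exact Or.inl h.symm
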